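/- arXiv:1203.6370 — 4 statements merged into one kernel-verified Lean document; each statement's English description precedes it below -/
import Mathlib

section
/- Let x, y be positive natural numbers and let n_x be the least natural number α such that x < 2^α. Then 2^{n_x} divides y if and only if the binomial coefficient C(y+2i, i) is even for every i = 1, ..., x. -/
open Nat Finset

lemma even_choose_iff (y i : ℕ) :
    2 ∣ Nat.choose (y + 2 * i) i ↔
      ∃ j, 1 ≤ j ∧ 2 ^ j ≤ i % 2 ^ j + (y + i) % 2 ^ j := by
  haveI : Fact (Nat.Prime 2) := ⟨Nat.prime_two⟩
  have h1 : y + 2 * i = (y + i) + i := by ring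
  have hb : Nat.log 2 ((y + i) + i) < Nat.log 2 ((y + i) + i) + 1 := Nat.lt_succ_self _
  have hk := padicValNat_choose' (p := 2) (n := y + i) (k := i) hb
  have hpos : Nat.choose ((y + i) + i) i ≠ 0 :=
    (Nat.choose_pos (Nat.le_add_left i (y + i))).ne'
  rw [h1, dvd_iff_padicValNat_ne_zero hpos, hk]
  rw [Finset.card_ne_zero, Finset.filter_nonempty_iff]
  constructor
  · rintro ⟨j, hj, hcar⟩
    exact ⟨j, (Finset.mem_Ico.mp hj).1, hcar⟩
  · rintro ⟨j, hj1, hcar⟩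
    refine ⟨j, Finset.mem_Ico.mpr ⟨hj1, ?_⟩, hcar⟩
    have ha : i % 2 ^ j ≤ i := Nat.mod_le _ _
    have hb' : (y + i) % 2 ^ j ≤ y + i := Nat.mod_le _ _
    have h2j : 2 ^ j ≤ (y + i) + i := by omega
    have := Nat.le_log_of_pow_le (by norm_num) h2j
    omega

lemma mod_zero_of_dvd' {m n : ℕ} (h : n ∣ m) : m % n = 0 := by
  obtain ⟨c, rfl⟩ := h; exact Nat.mul_mod_right _ _

theorem kostka_binomial_even_iff (x y : ℕ) (hx : 0 < x) (hy : 0 < y)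
    (nx : ℕ) (hnx : IsLeast {α : ℕ | x < 2 ^ α} nx) :
    2 ^ nx ∣ y ↔ ∀ i : ℕ, 1 ≤ i → i ≤ x → 2 ∣ Nat.choose (y + 2 * i) i := by
  obtain ⟨hmem, hlb⟩ := hnx
  simp only [Set.mem_setOf_eq] at hmem
  constructor
  · intro hdvd i hi1 hix
    rw [even_choose_iff]
    set v := padicValNat 2 i with hv
    have hvd : 2 ^ v ∣ i := pow_padicValNat_dvd
    have hvnd : ¬ 2 ^ (v + 1) ∣ i := pow_succ_padicValNat_not_dvd (by omega)
    have h2vi : 2 ^ v ≤ i := Nat.le_of_dvd (by omega) hvd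
    have hvn : v < nx := by
      by_contra hcon
      have : 2 ^ nx ≤ 2 ^ v := Nat.pow_le_pow_right (by norm_num) (by omega)
      omega
    refine ⟨v + 1, by omega, ?_⟩
    have hp1 : 0 < 2 ^ (v + 1) := Nat.pow_pos (by norm_num)
    have hy0 : y % 2 ^ (v + 1) = 0 :=
      mod_zero_of_dvd' (dvd_trans (pow_dvd_pow 2 (by omega)) hdvd)
    have hyi : (y + i) % 2 ^ (v + 1) = i % 2 ^ (v + 1) := by
      have := Nat.add_mod y i (2 ^ (v + 1))
      rw [hy0] at this
      simpa [Nat.mod_mod_of_dvd i (dvd_refl (2 ^ (v + 1)))] using this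
    have hi2v : i % 2 ^ (v + 1) = 2 ^ v := by
      set r := i % 2 ^ (v + 1) with hr
      have hrd : 2 ^ v ∣ r :=
        (Nat.dvd_mod_iff (pow_dvd_pow 2 (Nat.le_succ v))).mpr hvd
      have hrne : r ≠ 0 := by
        intro h0
        exact hvnd (Nat.dvd_iff_mod_eq_zero.mpr h0)
      have hrlt : r < 2 ^ (v + 1) := Nat.mod_lt _ hp1
      obtain ⟨q, hq⟩ := hrd
      have hpv : 0 < 2 ^ v := Nat.pow_pos (by norm_num)
      have hps : 2 ^ (v + 1) = 2 ^ v * 2 := pow_succ 2 v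
      rcases q with _ | _ | q
      · omega
      · omega
      · have : 2 ^ v * (q + 1 + 1) = 2 ^ v * q + 2 ^ v * 2 := by ring
        omega
    rw [hyi, hi2v, pow_succ]
    omega
  · intro h
    by_contra hnd
    set v := padicValNat 2 y with hv
    have hvd : 2 ^ v ∣ y := pow_padicValNat_dvd
    have hvnd : ¬ 2 ^ (v + 1) ∣ y := pow_succ_padicValNat_not_dvd (by omega)
    have hvn : v < nx := by
      by_contra hc
      exact hnd (dvd_trans (pow_dvd_pow 2 (by omega)) hvd)
    have hnx1 : nx ≠ 0 := by
      rintro rfl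
      simp at hmem
      omega
    have hxl : 2 ^ (nx - 1) ≤ x := by
      by_contra hc
      have : nx ≤ nx - 1 := hlb (by omega : x < 2 ^ (nx - 1))
      omega
    have hivx : 2 ^ v ≤ x :=
      le_trans (Nat.pow_le_pow_right (by norm_num) (by omega)) hxl
    obtain ⟨j, hj1, hcar⟩ :=
      (even_choose_iff y (2 ^ v)).mp (h (2 ^ v) Nat.one_le_two_pow hivx)
    have hu : 2 ^ v * (y / 2 ^ v) = y := Nat.mul_div_cancel' hvd
    have huodd : ¬ 2 ∣ (y / 2 ^ v) := by
      rintro ⟨w, hw⟩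
      exact hvnd ⟨w, by rw [pow_succ]; nlinarith [hu]⟩
    have hdd : 2 ^ (v + 1) ∣ y + 2 ^ v := by
      obtain ⟨w, hw⟩ : 2 ∣ (y / 2 ^ v + 1) := by
        rcases Nat.even_or_odd (y / 2 ^ v) with he | ho
        · exact absurd he.two_dvd huodd
        · exact (Odd.add_one ho).two_dvd
      refine ⟨w, ?_⟩
      rw [pow_succ]
      nlinarith [hu]
    rcases le_or_gt j v with hjv | hjv
    · have h1 : 2 ^ v % 2 ^ j = 0 := mod_zero_of_dvd' (pow_dvd_pow 2 hjv)
      have h2 : (y + 2 ^ v) % 2 ^ j = 0 :=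
        mod_zero_of_dvd' (dvd_trans (pow_dvd_pow 2 (by omega)) hdd)
      have : 0 < 2 ^ j := Nat.pow_pos (by norm_num)
      omega
    · have h1 : 2 ^ v % 2 ^ j = 2 ^ v :=
        Nat.mod_eq_of_lt (Nat.pow_lt_pow_right (by norm_num) hjv)
      set r := (y + 2 ^ v) % 2 ^ j with hr
      have hrd : 2 ^ (v + 1) ∣ r :=
        (Nat.dvd_mod_iff (pow_dvd_pow 2 (by omega))).mpr hdd
      have hrlt : r < 2 ^ j := Nat.mod_lt _ (Nat.pow_pos (by norm_num))
      obtain ⟨q, hq⟩ := hrd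
      have hjdec : 2 ^ j = 2 ^ (v + 1) * 2 ^ (j - (v + 1)) := by
        rw [← pow_add]; congr 1; omega
      set a := 2 ^ (v + 1) with ha
      set c := 2 ^ (j - (v + 1)) with hc
      have hqc : q < c := by
        have : a * q < a * c := by omega
        exact Nat.lt_of_mul_lt_mul_left this
      have hqc' : a * q + a ≤ a * c := by
        have h' : a * (q + 1) ≤ a * c := Nat.mul_le_mul_left a (by omega)
        nlinarith
      have has : a = 2 ^ v + 2 ^ v := by rw [ha, pow_succ]; ring
      have hpv : 0 < 2 ^ v := Nat.pow_pos (by norm_num)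
      omega
end

section
/- Let x, y be positive natural numbers and let n_x be the least natural number α such that x < 2^α. If 2^{n_x} does not divide y, then x ≥ 2^{ν(y)} and the binomial coefficient C(y + 2^{ν(y)+1}, 2^{ν(y)}) is odd, where ν(y) is the 2-adic valuation of y. -/
lemma choose_two_pow_mul_modEq (v a : ℕ) :
    Nat.choose (2 ^ v * a) (2 ^ v) ≡ a [MOD 2] := by
  induction v with
  | zero => simp [Nat.ModEq]
  | succ v ih =>
    have : Fact (Nat.Prime 2) := ⟨Nat.prime_two⟩
    have h := @Choose.choose_modEq_choose_mod_mul_choose_div_nat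
      (2 ^ (v + 1) * a) (2 ^ (v + 1)) 2 this
    have h1 : 2 ^ (v + 1) * a % 2 = 0 := by
      simp [Nat.mul_mod, Nat.pow_mod]
    have h2 : (2 ^ (v + 1) : ℕ) % 2 = 0 := by
      simp [Nat.pow_mod]
    have h3 : 2 ^ (v + 1) * a / 2 = 2 ^ v * a := by
      rw [pow_succ, mul_comm (2 ^ v) 2, mul_assoc, Nat.mul_div_cancel_left _ (by norm_num)]
    have h4 : (2 ^ (v + 1) : ℕ) / 2 = 2 ^ v := by
      rw [pow_succ, Nat.mul_div_cancel _ (by norm_num)]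
    rw [h1, h2, h3, h4] at h
    simp only [Nat.choose_self, one_mul] at h
    exact h.trans ih

theorem kostka_binomial_odd (x y : ℕ) (hx : 0 < x) (hy : 0 < y)
    (nx : ℕ) (hnx : IsLeast {α : ℕ | x < 2 ^ α} nx)
    (hnd : ¬ 2 ^ nx ∣ y) :
    2 ^ padicValNat 2 y ≤ x ∧
      Odd (Nat.choose (y + 2 ^ (padicValNat 2 y + 1)) (2 ^ padicValNat 2 y)) := by
  have : Fact (Nat.Prime 2) := ⟨Nat.prime_two⟩
  set v := padicValNat 2 y with hv
  -- v < nx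
  have hvlt : v < nx := by
    by_contra h
    exact hnd ((padicValNat_dvd_iff_le hy.ne').mpr (le_of_not_gt h))
  -- nx ≥ 1
  have hnx1 : 1 ≤ nx := by
    rcases Nat.eq_zero_or_pos nx with h | h
    · exfalso; have := hnx.1; rw [h] at this; simp at this; omega
    · exact h
  -- x ≥ 2 ^ (nx - 1)
  have hge : 2 ^ (nx - 1) ≤ x := by
    by_contra h
    push_neg at h
    have := hnx.2 h
    omega
  have part1 : 2 ^ v ≤ x := by
    calc 2 ^ v ≤ 2 ^ (nx - 1) := Nat.pow_le_pow_right (by norm_num) (by omega)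
    _ ≤ x := hge
  refine ⟨part1, ?_⟩
  -- y = 2 ^ v * m with m odd
  obtain ⟨m, hm⟩ : 2 ^ v ∣ y := pow_padicValNat_dvd
  have hmodd : Odd m := by
    rcases Nat.even_or_odd m with he | ho
    · exfalso
      obtain ⟨c, hc⟩ := he
      have : 2 ^ (v + 1) ∣ y := ⟨c, by rw [hm, hc]; ring⟩
      have := (padicValNat_dvd_iff_le hy.ne').mp this
      omega
    · exact ho
  have key : y + 2 ^ (v + 1) = 2 ^ v * (m + 2) := by
    rw [hm]; ring
  rw [key]
  have h := choose_two_pow_mul_modEq v (m + 2)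
  rw [Nat.odd_iff]
  have hm2 : (m + 2) % 2 = 1 := by
    rw [Nat.add_mod]
    simpa [Nat.odd_iff] using hmodd
  unfold Nat.ModEq at h
  omega
end

section
/- Let j, r be natural numbers with r even and r ≥ 2j > 0, and let n_j be the least α with j < 2^α. Then the following are equivalent: (1) 2^{n_j} divides r - 2j; (2) for every s with 0 ≤ s < j, the binomial coefficient C(r - 2s, j - s) is even. -/
lemma odd_choose_iff : ∀ n k : ℕ, Odd (n.choose k) ↔ ∀ i, k.testBit i = true → n.testBit i = true := by
  intro n
  induction n using Nat.strong_induction_on with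
  | _ n ih =>
    intro k
    rcases Nat.eq_zero_or_pos n with hn | hn
    · subst hn
      constructor
      · intro h i hi
        have hk : k = 0 := by
          by_contra hk
          simp [Nat.choose_eq_zero_of_lt (Nat.pos_of_ne_zero hk)] at h
        simp [hk] at hi
      · intro h
        have hk : k = 0 := Nat.eq_of_testBit_eq fun i => by
          by_cases hki : k.testBit i = true
          · have := h i hki; simp_all
          · simp_all
        simp [hk]
    · have hmod := @Choose.choose_modEq_choose_mod_mul_choose_div_nat n k 2 ⟨Nat.prime_two⟩
      have h2 : Odd (n.choose k) ↔
          Odd ((n % 2).choose (k % 2)) ∧ Odd ((n / 2).choose (k / 2)) := by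
        rw [← Nat.odd_mul, Nat.odd_iff, Nat.odd_iff]
        unfold Nat.ModEq at hmod
        omega
      rw [h2, ih (n / 2) (Nat.div_lt_self hn one_lt_two) (k / 2)]
      have hfirst : Odd ((n % 2).choose (k % 2)) ↔ (k % 2 = 1 → n % 2 = 1) := by
        have h1 : n % 2 = 0 ∨ n % 2 = 1 := Nat.mod_two_eq_zero_or_one n
        have h1' : k % 2 = 0 ∨ k % 2 = 1 := Nat.mod_two_eq_zero_or_one k
        rcases h1 with h | h <;> rcases h1' with h' | h' <;> simp [h, h']
      rw [hfirst]
      constructor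
      · rintro ⟨h0, hs⟩ i hi
        cases i with
        | zero =>
          rw [Nat.testBit_zero] at hi ⊢
          simp only [decide_eq_true_eq] at hi ⊢
          exact h0 hi
        | succ i =>
          rw [Nat.testBit_succ] at hi ⊢
          exact hs i hi
      · intro h
        constructor
        · intro h0
          have := h 0 (by rw [Nat.testBit_zero]; simp [h0])
          rw [Nat.testBit_zero] at this; simpa using this
        · intro i hi
          have := h (i + 1) (by rw [Nat.testBit_succ]; exact hi)
          rwa [Nat.testBit_succ] at this

theorem indecomposable_two_part_criterion (j r : ℕ) (hr : Even r)
    (hj : 0 < j) (hjr : 2 * j ≤ r)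
    (nj : ℕ) (hnj : IsLeast {α : ℕ | j < 2 ^ α} nj) :
    2 ^ nj ∣ (r - 2 * j) ↔ ∀ s : ℕ, s < j → 2 ∣ Nat.choose (r - 2 * s) (j - s) := by
  set m := r - 2 * j with hm
  have hr2 : r % 2 = 0 := Nat.even_iff.mp hr
  have hme : m % 2 = 0 := by omega
  have hj2 : j < 2 ^ nj := hnj.1
  have hnj0 : nj ≠ 0 := by
    intro h
    rw [h] at hj2
    omega
  have hlow : 2 ^ (nj - 1) ≤ j := by
    by_contra hl
    have := hnj.2 (show j < 2 ^ (nj - 1) by omega)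
    omega
  constructor
  · -- forward
    rintro ⟨t, ht⟩ s hs
    set k := j - s with hk
    have hk1 : 1 ≤ k := by omega
    have hkj : k ≤ j := by omega
    have hrs : r - 2 * s = m + 2 * k := by omega
    rw [hrs]
    rw [← even_iff_two_dvd, (Nat.not_odd_iff_even).symm]
    intro hodd
    rw [odd_choose_iff] at hodd
    have hex : ∃ i, k.testBit i = true := by
      by_contra hex
      push_neg at hex
      have : k = 0 := Nat.eq_of_testBit_eq fun i => by
        simpa using (Bool.eq_false_iff.mpr (hex i))
      omega
    set i₀ := Nat.find hex with hi₀def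
    have hi0 : k.testBit i₀ = true := Nat.find_spec hex
    have hmin : ∀ i, i < i₀ → k.testBit i = false := fun i hi =>
      Bool.eq_false_iff.mpr (Nat.find_min hex hi)
    have key : ∀ i, i < nj → (m + 2 * k).testBit i = (2 * k).testBit i := by
      intro i hi
      have h1 : (m + 2 * k) % 2 ^ nj = (2 * k) % 2 ^ nj := by
        rw [ht]
        rw [show 2 ^ nj * t + 2 * k = 2 * k + 2 ^ nj * t from by ring]
        exact Nat.add_mul_mod_self_left _ _ _
      have e1 : (m + 2 * k).testBit i = ((m + 2 * k) % 2 ^ nj).testBit i := by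
        rw [Nat.testBit_mod_two_pow]; simp [hi]
      have e2 : (2 * k).testBit i = ((2 * k) % 2 ^ nj).testBit i := by
        rw [Nat.testBit_mod_two_pow]; simp [hi]
      rw [e1, e2, h1]
    -- bit 0 of m + 2k is false
    have hbit0 : (m + 2 * k).testBit 0 = false := by
      rw [Nat.testBit_zero]
      simp only [decide_eq_false_iff_not]
      omega
    have hi0pos : 1 ≤ i₀ := by
      rcases Nat.eq_zero_or_pos i₀ with h0 | h0
      · exfalso
        have h2 := hodd i₀ hi0
        rw [h0] at h2
        rw [hbit0] at h2
        simp at h2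
      · exact h0
    have hi0lt : i₀ < nj := by
      by_contra hge
      push_neg at hge
      have : k < 2 ^ i₀ := lt_of_lt_of_le hj2 (by
        exact Nat.pow_le_pow_right (by norm_num) hge) |>.trans_le' (by omega)
      have := Nat.testBit_lt_two_pow (x := k) (i := i₀) (by omega)
      simp [this] at hi0
    have h1 := hodd i₀ hi0
    rw [key i₀ hi0lt] at h1
    have : (2 * k).testBit i₀ = k.testBit (i₀ - 1) := by
      have : i₀ = (i₀ - 1) + 1 := by omega
      rw [this, Nat.testBit_succ]
      congr 1
      omega
    rw [this, hmin (i₀ - 1) (by omega)] at h1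
    exact Bool.false_ne_true h1
  · -- backward
    intro h
    by_contra hnd
    have hm0 : m ≠ 0 := by
      intro h0
      exact hnd (h0 ▸ dvd_zero _)
    have hexm : ∃ i, m.testBit i = true := by
      by_contra hex
      push_neg at hex
      exact hm0 (Nat.eq_of_testBit_eq fun i => by
        simpa using (Bool.eq_false_iff.mpr (hex i)))
    set v := Nat.find hexm with hvdef
    have hv : m.testBit v = true := Nat.find_spec hexm
    have hvmin : ∀ i, i < v → m.testBit i = false := fun i hi =>
      Bool.eq_false_iff.mpr (Nat.find_min hexm hi)
    have hvdvd : 2 ^ v ∣ m := by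
      have : m % 2 ^ v = 0 := by
        have := Nat.eq_of_testBit_eq (x := m % 2 ^ v) (y := 0) fun i => by
          rw [Nat.testBit_mod_two_pow, Nat.zero_testBit]
          by_cases hiv : i < v
          · simp [hvmin i hiv]
          · simp [hiv]
        rw [this]
      exact Nat.dvd_of_mod_eq_zero this
    have hv1 : 1 ≤ v := by
      rcases Nat.eq_zero_or_pos v with h0 | h0
      · exfalso
        have : m.testBit 0 = false := by
          rw [Nat.testBit_zero]
          simp only [decide_eq_false_iff_not]
          omega
        rw [h0] at hv
        rw [hv] at this
        simp at this
      · exact h0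
    have hvnj : v < nj := by
      by_contra hge
      push_neg at hge
      exact hnd (dvd_trans (pow_dvd_pow 2 hge) hvdvd)
    set k := 2 ^ v with hkdef
    have hkj : k ≤ j := le_trans (Nat.pow_le_pow_right (by norm_num) (by omega)) hlow
    have hk1 : 1 ≤ k := Nat.one_le_two_pow
    set s := j - k with hsdef
    have hs : s < j := by omega
    have hjs : j - s = k := by omega
    have hrs : r - 2 * s = m + 2 * k := by omega
    have hdvd := h s hs
    rw [hjs, hrs, ← even_iff_two_dvd, (Nat.not_odd_iff_even).symm] at hdvd
    apply hdvd
    rw [odd_choose_iff]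
    intro i hi
    have hiv : i = v := by
      by_contra hne
      rw [Nat.testBit_two_pow_of_ne (Ne.symm hne)] at hi
      exact Bool.false_ne_true hi
    subst hiv
    -- show (m + 2 * 2^i).testBit i = true
    obtain ⟨t, ht⟩ := hvdvd
    have htodd : t % 2 = 1 := by
      have := hv
      rw [Nat.testBit_eq_decide_div_mod_eq, ht, Nat.mul_div_cancel_left t (Nat.pow_pos (by norm_num))] at this
      simpa using this
    rw [Nat.testBit_eq_decide_div_mod_eq]
    have : m + 2 * k = 2 ^ v * (t + 2) := by
      rw [ht, hkdef]; ring
    rw [this, Nat.mul_div_cancel_left _ (Nat.pow_pos (by norm_num))]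
    simp only [decide_eq_true_eq]
    omega
end

section
/- Let r be even, 2^n ≤ r < 2^{n+1}, and let 0 < j ≤ r/2 with n_j the least α such that j < 2^α. Then 2^{n_j} divides r - 2j if and only if 2^{i-1} ≤ j < 2^i and j ≡ (r - 2^n)/2 (mod 2^{i-1}), where i = n_j. -/
theorem divisibility_iff_congruence (r n j : ℕ) (hr : Even r)
    (h1 : 2 ^ n ≤ r) (h2 : r < 2 ^ (n + 1)) (hj : 0 < j) (hjr : 2 * j ≤ r)
    (nj : ℕ) (hnj : IsLeast {α : ℕ | j < 2 ^ α} nj) :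
    2 ^ nj ∣ (r - 2 * j) ↔
      (2 ^ (nj - 1) ≤ j ∧ j < 2 ^ nj ∧
        j % 2 ^ (nj - 1) = ((r - 2 ^ n) / 2) % 2 ^ (nj - 1)) := by
  obtain ⟨hmem, hlb⟩ := hnj
  simp only [Set.mem_setOf_eq] at hmem
  -- nj ≥ 1
  have hnj1 : 1 ≤ nj := by
    by_contra h
    interval_cases nj
    · simp at hmem; omega
  -- lower bound 2^(nj-1) ≤ j
  have hle : 2 ^ (nj - 1) ≤ j := by
    by_contra h
    push_neg at h
    have := hlb h
    omega
  -- n ≥ 1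
  have hn1 : 1 ≤ n := by
    by_contra h
    push_neg at h
    interval_cases n
    · simp at h2; omega
  -- nj ≤ n
  have hnjn : nj ≤ n := by
    by_contra h
    push_neg at h
    have e1 : 2 ^ n ≤ 2 ^ (nj - 1) := Nat.pow_le_pow_right (by norm_num) (by omega)
    have e2 : 2 ^ (n + 1) = 2 * 2 ^ n := by rw [pow_succ]; ring
    omega
  -- r - 2^n is even
  have hdvd2 : 2 ∣ r - 2 ^ n := by
    apply Nat.dvd_sub hr.two_dvd
    exact dvd_pow_self 2 (by omega)
  obtain ⟨t, ht⟩ := hdvd2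
  have hrn : r = 2 ^ n + 2 * t := by omega
  have hpn : 2 ^ n = 2 * 2 ^ (n - 1) := by
    rw [← pow_succ']; congr 1; omega
  have hpnj : 2 ^ nj = 2 * 2 ^ (nj - 1) := by
    rw [← pow_succ']; congr 1; omega
  have hma : (2 : ℕ) ^ (nj - 1) ∣ 2 ^ (n - 1) := pow_dvd_pow 2 (by omega)
  set m := 2 ^ (nj - 1) with hm
  set a := 2 ^ (n - 1) with ha
  have ht2 : (r - 2 ^ n) / 2 = t := by omega
  rw [ht2]
  have hjat : j ≤ a + t := by omega
  have hsub : r - 2 * j = 2 * (a + t - j) := by omega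
  rw [hsub, hpnj]
  have hm0 : 0 < m := Nat.pow_pos (by norm_num)
  constructor
  · intro hdiv
    refine ⟨hle, by omega, ?_⟩
    have h' : m ∣ a + t - j := (mul_dvd_mul_iff_left (two_ne_zero)).mp hdiv
    have hmeq : j ≡ a + t [MOD m] := (Nat.modEq_iff_dvd' hjat).mpr h'
    have hat : a + t ≡ t [MOD m] := by
      have : a ≡ 0 [MOD m] := (Nat.modEq_zero_iff_dvd).mpr hma
      calc a + t ≡ 0 + t [MOD m] := this.add_right t
        _ = t := by ring
    exact hmeq.trans hat
  · rintro ⟨-, -, hmod⟩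
    have hmeq : j ≡ t [MOD m] := hmod
    have hat : t ≡ a + t [MOD m] := by
      have : (0 : ℕ) ≡ a [MOD m] := ((Nat.modEq_zero_iff_dvd).mpr hma).symm
      calc t = 0 + t := by ring
        _ ≡ a + t [MOD m] := this.add_right t
    have h' : m ∣ a + t - j := (Nat.modEq_iff_dvd' hjat).mp (hmeq.trans hat)
    exact mul_dvd_mul_left 2 h'
end
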